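/- For A > 0, B ∈ ℝ, C ∈ ℝ with C + √(C^2 + A B) > 0 (and C^2 + A B ≥ 0), the function U(ξ) = A^{1/q} / (C + √(C^2 + A B) · cosh(q √A ξ))^{1/q}, for q a positive integer, satisfies the first-order ODE (U')^2 = A U^2 − B U^{2q+2} − 2C U^{q+2} for all real ξ. -/

import Mathlib

/-- For A > 0, C² + AB ≥ 0 and C + √(C²+AB) > 0, the line-soliton profile
U(ξ) = A^{1/q} / (C + √(C²+AB) cosh(q√A ξ))^{1/q}, q a positive integer,
satisfies (U')² = A U² − B U^{2q+2} − 2C U^{q+2} for all real ξ. -/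
theorem stmt4 (q : ℕ) (hq : 0 < q) (A B C : ℝ) (hA : 0 < A)
    (hΔ : 0 ≤ C ^ 2 + A * B) (hpos : 0 < C + Real.sqrt (C ^ 2 + A * B))
    (U : ℝ → ℝ)
    (hU : U = fun ξ => A ^ ((1 : ℝ) / q) /
        (C + Real.sqrt (C ^ 2 + A * B) * Real.cosh (q * Real.sqrt A * ξ)) ^ ((1 : ℝ) / q)) :
    ∀ ξ : ℝ, (deriv U ξ) ^ 2
      = A * U ξ ^ 2 - B * U ξ ^ (2 * q + 2) - 2 * C * U ξ ^ (q + 2) := by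
  intro ξ
  set s := Real.sqrt (C ^ 2 + A * B) with hs
  set w := Real.sqrt A with hw
  have hs2 : s ^ 2 = C ^ 2 + A * B := Real.sq_sqrt hΔ
  have hw2 : w ^ 2 = A := Real.sq_sqrt hA.le
  have hsnn : 0 ≤ s := Real.sqrt_nonneg _
  have hDpos : ∀ x : ℝ, 0 < C + s * Real.cosh (q * w * x) := by
    intro x
    have h1 : 1 ≤ Real.cosh (q * w * x) := Real.one_le_cosh _
    nlinarith [hpos]
  have hqR : (q : ℝ) ≠ 0 := Nat.cast_ne_zero.mpr hq.ne'
  have hU' : U = fun x => A ^ ((1:ℝ)/q) * (C + s * Real.cosh (q*w*x)) ^ (-(1/q : ℝ)) := by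
    rw [hU]; funext x
    rw [Real.rpow_neg (hDpos x).le, div_eq_mul_inv]
  set d := C + s * Real.cosh (q * w * ξ) with hd
  have hdpos : 0 < d := hDpos ξ
  set a := A ^ ((1:ℝ)/q) with ha
  set e := d ^ (-(1/q : ℝ)) with he
  have hapos : 0 < a := Real.rpow_pos_of_pos hA _
  have hepos : 0 < e := Real.rpow_pos_of_pos hdpos _
  have haq : a ^ q = A := by
    rw [ha, ← Real.rpow_natCast (A ^ ((1:ℝ)/q)) q, ← Real.rpow_mul hA.le]
    rw [show (1/q : ℝ) * q = 1 by field_simp, Real.rpow_one]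
  have heq : e ^ q = d⁻¹ := by
    rw [he, ← Real.rpow_natCast (d ^ (-(1/q:ℝ))) q, ← Real.rpow_mul hdpos.le]
    rw [show (-(1/q) : ℝ) * q = -1 by field_simp, Real.rpow_neg_one]
  have hed : d ^ ((-(1/q:ℝ)) - 1) = e / d := by
    rw [Real.rpow_sub hdpos, Real.rpow_one, he]
  have hD : HasDerivAt (fun x => C + s * Real.cosh (q*w*x))
      (s * (Real.sinh (q*w*ξ) * (q*w))) ξ := by
    have h1 : HasDerivAt (fun x : ℝ => q*w*x) ((q:ℝ)*w) ξ := by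
      simpa using (hasDerivAt_id ξ).const_mul ((q:ℝ)*w)
    exact ((h1.cosh).const_mul s).const_add C
  have hDU : HasDerivAt U
      (a * ((s * (Real.sinh (q*w*ξ) * (q*w))) * (-(1/q:ℝ)) * d ^ ((-(1/q:ℝ)) - 1))) ξ := by
    rw [hU']
    exact (hD.rpow_const (Or.inl hdpos.ne')).const_mul _
  have hderiv : deriv U ξ
      = a * ((s * (Real.sinh (q*w*ξ) * (q*w))) * (-(1/q:ℝ)) * (e / d)) := by
    rw [hDU.deriv, hed]
  have hUξ : U ξ = a * e := by rw [hU']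
  set c := Real.cosh (q*w*ξ) with hc
  set sh := Real.sinh (q*w*ξ) with hsh
  have hsh2 : sh ^ 2 = c ^ 2 - 1 := Real.sinh_sq _
  have hpowq : (a * e) ^ q = A / d := by
    rw [mul_pow, haq, heq, ← div_eq_mul_inv]
  have key : s ^ 2 * sh ^ 2 * A = A * d ^ 2 - A ^ 2 * B - 2 * C * A * d := by
    rw [hd]
    linear_combination s ^ 2 * A * hsh2 - A * hs2
  have hv : deriv U ξ = -(a * s * sh * w * e / d) := by
    rw [hderiv]; field_simp
  rw [hv, hUξ, show 2*q+2 = q*2+2 by ring, pow_add, pow_mul, hpowq,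
    pow_add, hpowq]
  have hdne : d ≠ 0 := hdpos.ne'
  clear_value e d
  linear_combination (norm := skip) (a ^ 2 * e ^ 2 / d ^ 2) * key + (a ^ 2 * e ^ 2 * s ^ 2 * sh ^ 2 / d ^ 2) * hw2
  field_simp
  ring
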